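/- For every n ≥ 3, every 2-reachability network on n elements in which every transposition is a star transposition has length at least ⌈3(n−1)/2⌉. -/

import Mathlib

/-- The permutation of `ℕ` obtained by applying the transpositions in the list
in order (first element of the list applied first). -/
def netPerm (S : List (ℕ × ℕ)) : Equiv.Perm ℕ :=
  (S.map (fun p => Equiv.swap p.1 p.2)).reverse.prod

/-- `L` is a `t`-reachability network on the ground set `{1, …, n}`:
every entry is a transposition of two distinct points of `{1, …, n}`, and for every
choice of `t` distinct points `x 0, …, x (t-1)` of `{1, …, n}` there is a subsequence
of `L` whose composition (applied in order) maps `j + 1` to `x j` for `0 ≤ j < t`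
(i.e. maps the point `j` to `x_j` for `1 ≤ j ≤ t`). -/
def IsReachNet (n t : ℕ) (L : List (ℕ × ℕ)) : Prop :=
  (∀ p ∈ L, p.1 ∈ Finset.Icc 1 n ∧ p.2 ∈ Finset.Icc 1 n ∧ p.1 ≠ p.2) ∧
  ∀ x : Fin t → ℕ, (∀ j, x j ∈ Finset.Icc 1 n) → Function.Injective x →
    ∃ S : List (ℕ × ℕ), S.Sublist L ∧ ∀ j : Fin t, netPerm S (j.val + 1) = x j

namespace StarNet

/-- action of the star transposition `(1,c)` on a point -/
def st (c x : ℕ) : ℕ := if x = 1 then c else if x = c then 1 else x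

/-- running a list of star transpositions (partners only), first applied first -/
def run (B : List ℕ) (x : ℕ) : ℕ := B.foldl (fun y c => st c y) x

lemma st_eq_swap (c x : ℕ) : st c x = Equiv.swap 1 c x := by
  rw [Equiv.swap_apply_def]; rfl

lemma st_st (c x : ℕ) : st c (st c x) = x := by
  unfold st
  by_cases h1 : x = 1
  · subst h1
    by_cases hc : c = 1 <;> simp [hc]
  · by_cases hc : x = c <;> simp [h1, hc]

lemma st_inj (c : ℕ) {x y : ℕ} (h : st c x = st c y) : x = y := by
  have := congrArg (st c) h
  rwa [st_st, st_st] at this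

@[simp] lemma run_nil (x : ℕ) : run [] x = x := rfl

@[simp] lemma run_cons (c : ℕ) (B : List ℕ) (x : ℕ) : run (c :: B) x = run B (st c x) := rfl

lemma run_append (P Q : List ℕ) (x : ℕ) : run (P ++ Q) x = run Q (run P x) :=
  List.foldl_append ..

lemma run_inj (B : List ℕ) {x y : ℕ} (h : run B x = run B y) : x = y := by
  induction B generalizing x y with
  | nil => exact h
  | cons c B ih => exact st_inj c (ih h)

/-- a point not equal to 1 and not touched stays put -/
lemma run_eq_self (B : List ℕ) (x : ℕ) (hx : x ≠ 1) (hB : x ∉ B) : run B x = x := by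
  induction B with
  | nil => rfl
  | cons c B ih =>
    have hxc : x ≠ c := fun h => hB (h ▸ (List.mem_cons_self : c ∈ c :: B))
    rw [run_cons]
    have : st c x = x := by unfold st; simp [hx, hxc]
    rw [this]
    exact ih (fun h => hB (List.mem_cons_of_mem c h))

lemma run_mem (B : List ℕ) (x : ℕ) : run B x = x ∨ run B x = 1 ∨ run B x ∈ B := by
  induction B generalizing x with
  | nil => left; rfl
  | cons c B ih =>
    rw [run_cons]
    rcases ih (st c x) with h | h | h
    · rw [h]; unfold st
      by_cases h1 : x = 1
      · right; right; simp [h1, List.mem_cons_self]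
      · by_cases hc : x = c
        · right; left; simp [h1, hc]
        · left; simp [h1, hc]
    · right; left; exact h
    · right; right; exact List.mem_cons_of_mem c h

lemma run_one_mem (B : List ℕ) {v : ℕ} (h : run B 1 = v) (hv : v ≠ 1) : v ∈ B := by
  rcases run_mem B 1 with h' | h' | h' <;> rw [h] at h'
  · exact absurd h' hv
  · exact absurd h' hv
  · exact h'

lemma mem_of_run_eq_one (B : List ℕ) {x : ℕ} (h : run B x = 1) (hx : x ≠ 1) : x ∈ B := by
  by_contra hB
  rw [run_eq_self B x hx hB] at h
  exact hx h

end StarNet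

namespace StarNet

lemma netPerm_cons (p : ℕ × ℕ) (S : List (ℕ × ℕ)) (x : ℕ) :
    netPerm (p :: S) x = netPerm S (Equiv.swap p.1 p.2 x) := by
  unfold netPerm
  rw [List.map_cons, List.reverse_cons, List.prod_append, List.prod_singleton,
    Equiv.Perm.mul_apply]

lemma netPerm_eq_run (S : List (ℕ × ℕ)) (hS : ∀ p ∈ S, p.1 = 1) (x : ℕ) :
    netPerm S x = run (S.map Prod.snd) x := by
  induction S generalizing x with
  | nil => rfl
  | cons p S ih =>
    rw [netPerm_cons, List.map_cons, run_cons, hS p (List.mem_cons_self : p ∈ p :: S), ← st_eq_swap,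
      ih (fun q hq => hS q (List.mem_cons_of_mem p hq))]

/-- indices of a sublist pattern -/
lemma sublist_idx {p l : List ℕ} (h : p.Sublist l) :
    ∃ g : ℕ → ℕ, (∀ t, t + 1 < p.length → g t < g (t + 1)) ∧
      ∀ t < p.length, g t < l.length ∧ l.getD (g t) 0 = p.getD t 0 := by
  induction h with
  | slnil => exact ⟨id, fun t ht => by simp at ht, fun t ht => by simp at ht⟩
  | cons a h ih =>
    obtain ⟨g, hmono, hval⟩ := ih
    refine ⟨fun t => g t + 1, fun t ht => by have := hmono t ht; simp only []; omega, fun t ht => ?_⟩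
    obtain ⟨h1, h2⟩ := hval t ht
    exact ⟨by simp; omega, by rw [List.getD_cons_succ]; exact h2⟩
  | cons_cons a h ih =>
    obtain ⟨g, hmono, hval⟩ := ih
    refine ⟨fun t => match t with | 0 => 0 | (t + 1) => g t + 1, fun t ht => ?_, fun t ht => ?_⟩
    · match t with
      | 0 => show 0 < g 0 + 1; omega
      | (t + 1) =>
        show g t + 1 < g (t + 1) + 1
        have := hmono t (by simpa using ht)
        omega
    · match t with
      | 0 => exact ⟨by simp, by simp⟩
      | (t + 1) =>
        obtain ⟨h1, h2⟩ := hval t (by simpa using ht)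
        exact ⟨by simpa using h1, by simpa using h2⟩

lemma sub1_idx {a : ℕ} {l : List ℕ} (h : a ∈ l) :
    ∃ i, i < l.length ∧ l.getD i 0 = a := by
  obtain ⟨i, hi, hv⟩ := List.mem_iff_getElem.1 h
  exact ⟨i, hi, by rw [List.getD_eq_getElem l 0 hi]; exact hv⟩

lemma sub2_idx {a b : ℕ} {l : List ℕ} (h : [a, b].Sublist l) :
    ∃ i j, i < j ∧ j < l.length ∧ l.getD i 0 = a ∧ l.getD j 0 = b := by
  obtain ⟨g, hm, hv⟩ := sublist_idx h
  exact ⟨g 0, g 1, hm 0 (by norm_num), (hv 1 (by norm_num)).1,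
    (hv 0 (by norm_num)).2, (hv 1 (by norm_num)).2⟩

lemma sub3_idx {a b c : ℕ} {l : List ℕ} (h : [a, b, c].Sublist l) :
    ∃ i j k, i < j ∧ j < k ∧ k < l.length ∧
      l.getD i 0 = a ∧ l.getD j 0 = b ∧ l.getD k 0 = c := by
  obtain ⟨g, hm, hv⟩ := sublist_idx h
  exact ⟨g 0, g 1, g 2, hm 0 (by norm_num), hm 1 (by norm_num), (hv 2 (by norm_num)).1,
    (hv 0 (by norm_num)).2, (hv 1 (by norm_num)).2, (hv 2 (by norm_num)).2⟩

lemma sub4_idx {a b c d : ℕ} {l : List ℕ} (h : [a, b, c, d].Sublist l) :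
    ∃ i j k r, i < j ∧ j < k ∧ k < r ∧ r < l.length ∧
      l.getD i 0 = a ∧ l.getD j 0 = b ∧ l.getD k 0 = c ∧ l.getD r 0 = d := by
  obtain ⟨g, hm, hv⟩ := sublist_idx h
  exact ⟨g 0, g 1, g 2, g 3, hm 0 (by norm_num), hm 1 (by norm_num), hm 2 (by norm_num),
    (hv 3 (by norm_num)).1, (hv 0 (by norm_num)).2, (hv 1 (by norm_num)).2,
    (hv 2 (by norm_num)).2, (hv 3 (by norm_num)).2⟩

end StarNet

namespace StarNet

lemma count_pos_of_mem {l : List ℕ} {a : ℕ} (h : a ∈ l) : 1 ≤ l.count a :=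
  List.count_pos_iff.2 h

/-- helper: split a list at a unique occurrence -/
lemma split_at_unique {B : List ℕ} {s : ℕ} (hmem : s ∈ B) (hc : B.count s ≤ 1) :
    ∃ P Q, B = P ++ s :: Q ∧ s ∉ P ∧ s ∉ Q := by
  obtain ⟨P, Q, rfl⟩ := List.append_of_mem hmem
  rw [List.count_append, List.count_cons_self] at hc
  refine ⟨P, Q, rfl, fun h => ?_, fun h => ?_⟩
  · have := count_pos_of_mem h; omega
  · have := count_pos_of_mem h; omega

/-- Core lemma for the straddling fact (target `(1, s)`). -/
lemma core_str {B : List ℕ} {s : ℕ} (hs1 : s ≠ 1) (hs2 : s ≠ 2)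
    (hc : B.count s ≤ 1) (ha : run B 1 = 1) (hb : run B 2 = s) :
    ∃ w, w ≠ s ∧ [w, s, w].Sublist B := by
  have hmem : s ∈ B := by
    rcases run_mem B 2 with h | h | h <;> rw [hb] at h
    · exact absurd h hs2
    · exact absurd h hs1
    · exact h
  obtain ⟨P, Q, rfl, hsP, hsQ⟩ := split_at_unique hmem hc
  rw [run_append, run_cons] at ha hb
  set aP := run P 1 with haP
  set bP := run P 2 with hbP
  have hbPne : bP ≠ s := by
    rcases run_mem P 2 with h | h | h <;> rw [← hbP] at h
    · rw [h]; exact Ne.symm hs2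
    · rw [h]; exact Ne.symm hs1
    · intro hh; rw [hh] at h; exact hsP h
  have hbP1 : bP = 1 := by
    rcases run_mem Q (st s bP) with h | h | h <;> rw [hb] at h
    · unfold st at h
      by_cases h1 : bP = 1
      · exact h1
      · by_cases hc2 : bP = s
        · exact absurd hc2 hbPne
        · simp only [if_neg h1, if_neg hc2] at h; exact absurd h.symm hbPne
    · exact absurd h hs1
    · exact absurd h hsQ
  have haPne1 : aP ≠ 1 := by
    intro h
    have : (1 : ℕ) = 2 := run_inj P (by rw [← haP, ← hbP, h, hbP1])
    omega
  have haPP : aP ∈ P := by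
    rcases run_mem P 1 with h | h | h <;> rw [← haP] at h
    · exact absurd h haPne1
    · exact absurd h haPne1
    · exact h
  have haPns : aP ≠ s := fun h => hsP (h ▸ haPP)
  have hstA : st s aP = aP := by unfold st; simp [haPne1, haPns]
  rw [hstA] at ha
  have haQ : aP ∈ Q := mem_of_run_eq_one Q ha haPne1
  refine ⟨aP, haPns, ?_⟩
  exact (List.singleton_sublist.2 haPP).append ((List.singleton_sublist.2 haQ).cons₂ s)

/-- Core lemma for the pair fact (target `(s', s)`). -/
lemma core_pair {B : List ℕ} {s s' : ℕ} (hs1 : s ≠ 1) (hs2 : s ≠ 2)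
    (hs'1 : s' ≠ 1) (hs'2 : s' ≠ 2)
    (hcs : B.count s ≤ 1) (hcs' : B.count s' ≤ 1)
    (ha : run B 1 = s') (hb : run B 2 = s) :
    (∃ w, w ≠ s ∧ w ≠ s' ∧ [w, s, w, s'].Sublist B) ∨ [s', s].Sublist B := by
  have hmem : s' ∈ B := run_one_mem B ha hs'1
  obtain ⟨P, Q, rfl, hsP, hsQ⟩ := split_at_unique hmem hcs'
  rw [run_append, run_cons] at ha hb
  set aP := run P 1 with haP
  set bP := run P 2 with hbP
  have haPne : aP ≠ s' := by
    rcases run_mem P 1 with h | h | h <;> rw [← haP] at h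
    · rw [h]; exact Ne.symm hs'1
    · rw [h]; exact Ne.symm hs'1
    · intro hh; rw [hh] at h; exact hsP h
  have haP1 : aP = 1 := by
    rcases run_mem Q (st s' aP) with h | h | h <;> rw [ha] at h
    · unfold st at h
      by_cases h1 : aP = 1
      · exact h1
      · by_cases hc2 : aP = s'
        · exact absurd hc2 haPne
        · simp only [if_neg h1, if_neg hc2] at h; exact absurd h.symm haPne
    · exact absurd h hs'1
    · exact absurd h hsQ
  by_cases hsinQ : s ∈ Q
  · right
    exact ((List.singleton_sublist.2 hsinQ).cons₂ s').trans
      (List.sublist_append_right P _)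
  · left
    have hbPne1 : bP ≠ 1 := by
      intro h
      have : (1 : ℕ) = 2 := run_inj P (by rw [← haP, ← hbP, h, haP1])
      omega
    have hbPnes' : bP ≠ s' := by
      rcases run_mem P 2 with h | h | h <;> rw [← hbP] at h
      · rw [h]; exact Ne.symm hs'2
      · rw [h]; exact Ne.symm hs'1
      · intro hh; rw [hh] at h; exact hsP h
    have hstB : st s' bP = bP := by unfold st; simp [hbPne1, hbPnes']
    rw [hstB] at hb
    have hbPs : bP = s := by
      rcases run_mem Q bP with h | h | h <;> rw [hb] at h
      · exact h.symm
      · exact absurd h hs1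
      · exact absurd h hsinQ
    have hcsP : P.count s ≤ 1 := by
      rw [List.count_append] at hcs; omega
    have haP1' : run P 1 = 1 := by rw [← haP]; exact haP1
    have hbPs' : run P 2 = s := by rw [← hbP]; exact hbPs
    obtain ⟨w, hw, hsub⟩ := core_str hs1 hs2 hcsP haP1' hbPs'
    have hwP : w ∈ P := hsub.subset (by simp)
    refine ⟨w, hw, fun h => hsP (h ▸ hwP), ?_⟩
    exact hsub.append ((List.nil_sublist Q).cons₂ s')

/-- Core lemma: target `(2, u)` forces `2` before `u`. -/
lemma core_post2 {B : List ℕ} {u : ℕ} (hu1 : u ≠ 1)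
    (hc : B.count 2 ≤ 1) (ha : run B 1 = 2) (hb : run B 2 = u) :
    [2, u].Sublist B := by
  have hmem : (2 : ℕ) ∈ B := run_one_mem B ha (by norm_num)
  obtain ⟨P, Q, rfl, hsP, hsQ⟩ := split_at_unique hmem hc
  rw [run_append, run_cons] at hb
  have hbP : run P 2 = 2 := run_eq_self P 2 (by norm_num) hsP
  rw [hbP] at hb
  have hst2 : st 2 2 = 1 := by unfold st; norm_num
  rw [hst2] at hb
  have huQ : u ∈ Q := run_one_mem Q hb hu1
  exact ((List.singleton_sublist.2 huQ).cons₂ 2).trans (List.sublist_append_right P _)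

/-- Core lemma for the initial-extra fact (target `(s, 1)`). -/
lemma core_first {B : List ℕ} {s : ℕ} (hs1 : s ≠ 1) (hs2 : s ≠ 2)
    (hcs : B.count s ≤ 1) (h1B : ∀ c ∈ B, c ≠ 1)
    (ha : run B 1 = s) (hb : run B 2 = 1) :
    (∃ w, [w, w, s].Sublist B) ∨ [s, 2].Sublist B := by
  have hmem : s ∈ B := run_one_mem B ha hs1
  obtain ⟨P, Q, rfl, hsP, hsQ⟩ := split_at_unique hmem hcs
  rw [run_append, run_cons] at ha
  have haPne : run P 1 ≠ s := by
    rcases run_mem P 1 with h | h | h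
    · rw [h]; exact Ne.symm hs1
    · rw [h]; exact Ne.symm hs1
    · intro hh; rw [hh] at h; exact hsP h
  have haP1 : run P 1 = 1 := by
    rcases run_mem Q (st s (run P 1)) with h | h | h <;> rw [ha] at h
    · unfold st at h
      by_cases h1 : run P 1 = 1
      · exact h1
      · by_cases hc2 : run P 1 = s
        · exact absurd hc2 haPne
        · simp only [if_neg h1, if_neg hc2] at h; exact absurd h.symm haPne
    · exact absurd h hs1
    · exact absurd h hsQ
  have h2mem : (2 : ℕ) ∈ P ++ s :: Q := by
    by_contra h2
    have := run_eq_self (P ++ s :: Q) 2 (by norm_num) h2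
    rw [hb] at this
    norm_num at this
  rcases List.mem_append.1 h2mem with h2P | h2sQ
  · left
    obtain ⟨c, P', rfl⟩ : ∃ c P', P = c :: P' := by
      cases P with
      | nil => simp at h2P
      | cons c P' => exact ⟨c, P', rfl⟩
    rw [run_cons] at haP1
    have hcne1 : c ≠ 1 := h1B c (by simp)
    have hst : st c 1 = c := by unfold st; simp
    rw [hst] at haP1
    have hcP' : c ∈ P' := mem_of_run_eq_one P' haP1 hcne1
    exact ⟨c, (((List.singleton_sublist.2 hcP').cons₂ c).append
      ((List.nil_sublist Q).cons₂ s))⟩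
  · have h2Q : (2 : ℕ) ∈ Q := by
      rcases List.mem_cons.1 h2sQ with h | h
      · exact absurd h.symm hs2
      · exact h
    right
    exact ((List.singleton_sublist.2 h2Q).cons₂ s).trans (List.sublist_append_right P _)

end StarNet

namespace StarNet

lemma idx_mem_take {l : List ℕ} {i j v : ℕ} (hij : i < j) (hi : i < l.length)
    (hv : l.getD i 0 = v) : v ∈ l.take j := by
  have hlen : i < (l.take j).length := by simp; omega
  have hmem := List.getElem_mem hlen
  have heq : (l.take j)[i]'hlen = v := by
    rw [List.getElem_take]
    rw [List.getD_eq_getElem l 0 hi] at hv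
    exact hv
  rwa [heq] at hmem

lemma mem_drop_of_idx {l : List ℕ} {n j v : ℕ} (hnj : n ≤ j) (hj : j < l.length)
    (hv : l.getD j 0 = v) : v ∈ l.drop n := by
  have hlen : j - n < (l.drop n).length := by simp; omega
  have hmem := List.getElem_mem hlen
  have heq : (l.drop n)[j - n]'hlen = v := by
    rw [List.getElem_drop]
    rw [List.getD_eq_getElem l 0 hj] at hv
    rw [← hv]
    congr 1
    omega
  rwa [heq] at hmem

lemma two_idx_count {l : List ℕ} {i j v : ℕ} (hij : i < j) (hj : j < l.length)
    (hvi : l.getD i 0 = v) (hvj : l.getD j 0 = v) : 2 ≤ l.count v := by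
  have hi : i < l.length := lt_trans hij hj
  have hdrop : l.drop i = l[i] :: l.drop (i + 1) := List.drop_eq_getElem_cons hi
  have hmem : v ∈ l.drop (i + 1) := mem_drop_of_idx hij hj hvj
  have hsub : [v, v].Sublist (l.drop i) := by
    rw [hdrop, ← List.getD_eq_getElem l 0 hi, hvi]
    exact (List.singleton_sublist.2 hmem).cons₂ v
  have := (hsub.trans (List.drop_sublist i l)).count_le v
  simpa using this

end StarNet

open StarNet

/-- **Lower bound for 2-reachability with star transpositions.** For every `n ≥ 3`,
every 2-reachability network on `n` elements in which every transposition is a star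
transposition `(1, ·)` has length at least `⌈3(n-1)/2⌉`. -/
theorem two_reachability_star_lower_bound (n : ℕ) (hn : 3 ≤ n)
    (L : List (ℕ × ℕ)) (hL : IsReachNet n 2 L) (hstar : ∀ p ∈ L, p.1 = 1) :
    (3 * (n - 1) + 1) / 2 ≤ L.length := by
  classical
  obtain ⟨hL1, hL2⟩ := hL
  set A : List ℕ := L.map Prod.snd with hAdef
  have hlenA : A.length = L.length := List.length_map _
  have hA2 : ∀ c ∈ A, 2 ≤ c ∧ c ≤ n := by
    intro c hc
    obtain ⟨p, hp, rfl⟩ := List.mem_map.1 hc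
    obtain ⟨h1, h2, h3⟩ := hL1 p hp
    have hps := hstar p hp
    rw [Finset.mem_Icc] at h2
    constructor
    · rcases Nat.lt_or_ge p.2 2 with h | h
      · exfalso
        have : p.2 = 1 := by omega
        rw [hps, this] at h3
        exact h3 rfl
      · exact h
    · exact h2.2
  -- reachability in terms of `run`
  have reach : ∀ x1 x2 : ℕ, 1 ≤ x1 → x1 ≤ n → 1 ≤ x2 → x2 ≤ n → x1 ≠ x2 →
      ∃ B : List ℕ, B.Sublist A ∧ run B 1 = x1 ∧ run B 2 = x2 := by
    intro x1 x2 h11 h12 h21 h22 hne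
    have hmem : ∀ j : Fin 2, (![x1, x2]) j ∈ Finset.Icc 1 n := by
      intro j
      fin_cases j <;> simp [Finset.mem_Icc] <;> omega
    have hinj : Function.Injective ![x1, x2] := by
      intro a b hab
      fin_cases a <;> fin_cases b <;>
        simp only [Matrix.cons_val_zero, Matrix.cons_val_one, Matrix.head_cons] at hab <;>
        first
          | rfl
          | exact absurd hab hne
          | exact absurd hab.symm hne
    obtain ⟨S, hS, hj⟩ := hL2 ![x1, x2] hmem hinj
    have hS1 : ∀ p ∈ S, p.1 = 1 := fun p hp => hstar p (hS.subset hp)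
    have e0 := hj 0
    have e1 := hj 1
    simp only [Fin.val_zero, Fin.val_one, zero_add, Matrix.cons_val_zero,
      Matrix.cons_val_one, Matrix.head_cons] at e0 e1
    rw [netPerm_eq_run S hS1] at e0 e1
    exact ⟨S.map Prod.snd, hS.map _, e0, e1⟩
  have hmemA : ∀ v, 2 ≤ v → v ≤ n → v ∈ A := by
    intro v h2 hvn
    obtain ⟨B, hB, h1, _⟩ := reach v 1 (by omega) hvn (by omega) (by omega) (by omega)
    exact hB.subset (run_one_mem B h1 (by omega))
  -- first-occurrence index
  set q : ℕ → ℕ := fun v =>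
    if h : ∃ j, j < A.length ∧ A.getD j 0 = v then Nat.find h else 0 with hqdef
  have hq1 : ∀ v ∈ A, q v < A.length ∧ A.getD (q v) 0 = v := by
    intro v hv
    obtain ⟨j, hj1, hj2⟩ := sub1_idx hv
    have hex : ∃ j, j < A.length ∧ A.getD j 0 = v := ⟨j, hj1, hj2⟩
    rw [hqdef]
    simp only [dif_pos hex]
    exact Nat.find_spec hex
  have hqmin : ∀ v ∈ A, ∀ i, i < q v → A.getD i 0 ≠ v := by
    intro v hv i hi hval
    obtain ⟨j, hj1, hj2⟩ := sub1_idx hv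
    have hex : ∃ j, j < A.length ∧ A.getD j 0 = v := ⟨j, hj1, hj2⟩
    rw [hqdef] at hi
    simp only [dif_pos hex] at hi
    exact Nat.find_min hex hi ⟨lt_trans hi (Nat.find_spec hex).1, hval⟩
  have huniq : ∀ v, v ∈ A → A.count v = 1 → ∀ j, j < A.length → A.getD j 0 = v → j = q v := by
    intro v hv hc j hj hval
    rcases lt_trichotomy j (q v) with h | h | h
    · exact absurd hval (hqmin v hv j h)
    · exact h
    · exfalso
      have := two_idx_count h hj (hq1 v hv).2 hval
      omega
  have hq_notin_take : ∀ v ∈ A, v ∉ A.take (q v) := by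
    intro v hv hmem
    obtain ⟨i, hi, hval⟩ := List.mem_iff_getElem.1 hmem
    have hilen : i < A.length := by
      have := hi
      simp at this
      omega
    have hiq : i < q v := by
      have := hi
      simp at this
      omega
    have : A.getD i 0 = v := by
      rw [List.getD_eq_getElem A 0 hilen, ← hval, List.getElem_take]
    exact hqmin v hv i hiq this
  -- extra / non-extra indices
  set X := (Finset.range A.length).filter (fun j => A.getD j 0 ∈ A.take j) with hXdef
  set NX := (Finset.range A.length).filter (fun j => A.getD j 0 ∉ A.take j) with hNXdef
  have hXN : X.card + NX.card = A.length := by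
    rw [hXdef, hNXdef]
    rw [Finset.card_filter_add_card_filter_not]
    exact Finset.card_range _
  have hNX : n - 1 ≤ NX.card := by
    have hcard : (Finset.Icc 2 n).card = n - 1 := by rw [Nat.card_Icc]; omega
    rw [← hcard]
    apply Finset.card_le_card_of_injOn q
    · intro v hv
      rw [Finset.mem_coe, Finset.mem_Icc] at hv
      have hvA : v ∈ A := hmemA v hv.1 hv.2
      rw [Finset.mem_coe, hNXdef, Finset.mem_filter, Finset.mem_range]
      refine ⟨(hq1 v hvA).1, ?_⟩
      rw [(hq1 v hvA).2]
      exact hq_notin_take v hvA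
    · intro v hv v' hv' hqq
      rw [Finset.mem_coe, Finset.mem_Icc] at hv hv'
      have hvA : v ∈ A := hmemA v hv.1 hv.2
      have hv'A : v' ∈ A := hmemA v' hv'.1 hv'.2
      rw [← (hq1 v hvA).2, ← (hq1 v' hv'A).2, hqq]
  -- singles and multis
  set S1 := (Finset.Icc 2 n).filter (fun v => A.count v = 1) with hS1def
  set M := (Finset.Icc 2 n).filter (fun v => A.count v ≠ 1) with hMdef
  have hpart : S1.card + M.card = n - 1 := by
    rw [hS1def, hMdef, Finset.card_filter_add_card_filter_not, Nat.card_Icc]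
    omega
  have hM2 : ∀ v ∈ M, 2 ≤ A.count v := by
    intro v hv
    rw [hMdef, Finset.mem_filter, Finset.mem_Icc] at hv
    have := count_pos_of_mem (hmemA v hv.1.1 hv.1.2)
    omega
  -- injection of multis into X
  set rfun : ℕ → ℕ := fun v =>
    if h : ∃ j, j < A.length ∧ A.getD j 0 = v ∧ v ∈ A.take j then Nat.find h else 0
    with hrdef
  have hrX : ∀ v ∈ M, rfun v ∈ X ∧ A.getD (rfun v) 0 = v := by
    intro v hv
    have hc2 := hM2 v hv
    have hex : ∃ j, j < A.length ∧ A.getD j 0 = v ∧ v ∈ A.take j := by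
      have hdup : [v, v].Sublist A := by
        rw [← List.duplicate_iff_sublist]
        exact List.duplicate_iff_two_le_count.2 hc2
      obtain ⟨i, j, hij, hjl, hvi, hvj⟩ := sub2_idx hdup
      exact ⟨j, hjl, hvj, idx_mem_take hij (lt_trans hij hjl) hvi⟩
    rw [hrdef]
    simp only [dif_pos hex]
    obtain ⟨h1, h2, h3⟩ := Nat.find_spec hex
    constructor
    · rw [hXdef, Finset.mem_filter, Finset.mem_range]
      refine ⟨h1, ?_⟩
      rw [h2]
      exact h3
    · exact h2
  have hMX : M.card ≤ X.card := by
    apply Finset.card_le_card_of_injOn rfun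
    · intro v hv; exact (hrX v hv).1
    · intro v hv v' hv' hqq
      rw [Finset.mem_coe] at hv hv'
      rw [← (hrX v hv).2, ← (hrX v' hv').2, hqq]
  -- singles (other than 2)
  set S3 := S1.erase 2 with hS3def
  have hS3mem : ∀ s ∈ S3, 2 ≤ s ∧ s ≤ n ∧ s ≠ 2 ∧ A.count s = 1 ∧ s ∈ A := by
    intro s hs
    rw [hS3def, Finset.mem_erase, hS1def, Finset.mem_filter, Finset.mem_Icc] at hs
    exact ⟨hs.2.1.1, hs.2.1.2, hs.1, hs.2.2, hmemA s hs.2.1.1 hs.2.1.2⟩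
  -- straddle: for each single s ≥ 3 there is an extra index after q s
  have straddle : ∀ s ∈ S3, ∃ j, q s < j ∧ j < A.length ∧ A.getD j 0 ∈ A.take j := by
    intro s hs
    obtain ⟨hs2, hsn, hsne2, hsc, hsA⟩ := hS3mem s hs
    obtain ⟨B, hB, h1, h2⟩ := reach 1 s (by omega) (by omega) (by omega) hsn (by omega)
    obtain ⟨w, hw, hsub⟩ := core_str (by omega) hsne2
      (le_of_le_of_eq (hB.count_le s) hsc) h1 h2
    obtain ⟨i1, i2, i3, h12, h23, h3l, hv1, hv2, hv3⟩ := sub3_idx (hsub.trans hB)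
    have hi2 : i2 = q s := huniq s hsA hsc i2 (lt_trans h23 h3l) hv2
    exact ⟨i3, hi2 ▸ h23, h3l, by
      rw [hv3]; exact idx_mem_take (lt_trans h12 h23) (by omega) hv1⟩
  set efun : ℕ → ℕ := fun s =>
    if h : ∃ j, q s < j ∧ j < A.length ∧ A.getD j 0 ∈ A.take j then Nat.find h else 0
    with hedef
  have heX : ∀ s ∈ S3, q s < efun s ∧ efun s ∈ X := by
    intro s hs
    have hex := straddle s hs
    rw [hedef]
    simp only [dif_pos hex]
    obtain ⟨h1, h2, h3⟩ := Nat.find_spec hex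
    exact ⟨h1, by rw [hXdef, Finset.mem_filter, Finset.mem_range]; exact ⟨h2, h3⟩⟩
  have heminle : ∀ s ∈ S3, ∀ j, q s < j → j < A.length → A.getD j 0 ∈ A.take j →
      efun s ≤ j := by
    intro s hs j hj1 hj2 hj3
    have hex := straddle s hs
    rw [hedef]
    simp only [dif_pos hex]
    exact Nat.find_min' hex ⟨hj1, hj2, hj3⟩
  have emono : ∀ s ∈ S3, ∀ s' ∈ S3, q s < q s' → efun s < efun s' := by
    intro s hs s' hs' hqq
    obtain ⟨hs2, hsn, hsne2, hsc, hsA⟩ := hS3mem s hs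
    obtain ⟨hs'2, hs'n, hs'ne2, hs'c, hs'A⟩ := hS3mem s' hs'
    have hne : s ≠ s' := by
      intro h; rw [h] at hqq; omega
    obtain ⟨B, hB, h1, h2⟩ := reach s' s (by omega) hs'n (by omega) hsn (Ne.symm hne)
    rcases core_pair (by omega) hsne2 (by omega) hs'ne2
      (le_of_le_of_eq (hB.count_le s) hsc) (le_of_le_of_eq (hB.count_le s') hs'c)
      h1 h2 with ⟨w, hw1, hw2, hsub⟩ | hsub
    · obtain ⟨i1, i2, i3, i4, h12, h23, h34, h4l, hv1, hv2, hv3, hv4⟩ :=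
        sub4_idx (hsub.trans hB)
      have hi2 : i2 = q s := huniq s hsA hsc i2 (by omega) hv2
      have hi4 : i4 = q s' := huniq s' hs'A hs'c i4 h4l hv4
      have hle : efun s ≤ i3 := heminle s hs i3 (by omega)  (by omega) (by
        rw [hv3]; exact idx_mem_take (by omega) (by omega) hv1)
      have := (heX s' hs').1
      omega
    · exfalso
      obtain ⟨i, j, hij, hjl, hvi, hvj⟩ := sub2_idx (hsub.trans hB)
      have hi : i = q s' := huniq s' hs'A hs'c i (by omega) hvi
      have hj : j = q s := huniq s hsA hsc j hjl hvj
      omega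
  have heinj : Set.InjOn efun S3 := by
    intro s hs s' hs' heq
    rw [Finset.mem_coe] at hs hs'
    obtain ⟨_, _, _, hsc, hsA⟩ := hS3mem s hs
    obtain ⟨_, _, _, hs'c, hs'A⟩ := hS3mem s' hs'
    rcases lt_trichotomy (q s) (q s') with h | h | h
    · have := emono s hs s' hs' h; omega
    · rw [← (hq1 s hsA).2, ← (hq1 s' hs'A).2, h]
    · have := emono s' hs' s hs h; omega
  have hS3X : S3.card ≤ X.card :=
    Finset.card_le_card_of_injOn efun (fun s hs => (heX s hs).2) heinj
  -- case analysis on the multiplicity of 2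
  by_cases h2c : A.count 2 = 1
  · -- 2 is a single
    have h2S1 : 2 ∈ S1 := by
      rw [hS1def, Finset.mem_filter, Finset.mem_Icc]
      exact ⟨⟨le_refl 2, by omega⟩, h2c⟩
    have hcardS3 : S3.card = S1.card - 1 := by
      rw [hS3def, Finset.card_erase_of_mem h2S1]
    have hS1pos : 1 ≤ S1.card := Finset.card_pos.2 ⟨2, h2S1⟩
    by_cases hS3e : S3 = ∅
    · -- no other singles
      have : S1.card = 1 := by
        rw [hS3e] at hcardS3
        simp at hcardS3
        omega
      omega
    · -- there is a single s ≥ 3; get one more extra before the earliest one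
      obtain ⟨s0, hs0, hs0min⟩ :=
        Finset.exists_min_image S3 q (Finset.nonempty_of_ne_empty hS3e)
      obtain ⟨hs02, hs0n, hs0ne2, hs0c, hs0A⟩ := hS3mem s0 hs0
      have h2A : (2 : ℕ) ∈ A := hmemA 2 (le_refl 2) (by omega)
      -- q 2 < q s0
      have hq2lt : q 2 < q s0 := by
        obtain ⟨B, hB, h1, h2⟩ := reach 2 s0 (by omega) (by omega) (by omega) hs0n
          (Ne.symm hs0ne2)
        have hsub := (core_post2 (by omega) (le_of_le_of_eq (hB.count_le 2) h2c)
          h1 h2).trans hB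
        obtain ⟨i, j, hij, hjl, hvi, hvj⟩ := sub2_idx hsub
        have hi : i = q 2 := huniq 2 h2A h2c i (by omega) hvi
        have hj : j = q s0 := huniq s0 hs0A hs0c j hjl hvj
        omega
      -- extra index before q s0
      have hfirst : ∃ j0, j0 < q s0 ∧ j0 ∈ X := by
        obtain ⟨B, hB, h1, h2⟩ := reach s0 1 (by omega) hs0n (by omega) (by omega)
          (by omega)
        have h1B : ∀ c ∈ B, c ≠ 1 := by
          intro c hc
          have := hA2 c (hB.subset hc)
          omega
        rcases core_first (by omega) hs0ne2 (le_of_le_of_eq (hB.count_le s0) hs0c)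
          h1B h1 h2 with ⟨w, hsub⟩ | hsub
        · obtain ⟨i1, i2, i3, h12, h23, h3l, hv1, hv2, hv3⟩ := sub3_idx (hsub.trans hB)
          have hi3 : i3 = q s0 := huniq s0 hs0A hs0c i3 h3l hv3
          refine ⟨i2, by omega, ?_⟩
          rw [hXdef, Finset.mem_filter, Finset.mem_range]
          exact ⟨by omega, by rw [hv2]; exact idx_mem_take h12 (by omega) hv1⟩
        · exfalso
          obtain ⟨i, j, hij, hjl, hvi, hvj⟩ := sub2_idx (hsub.trans hB)
          have hi : i = q s0 := huniq s0 hs0A hs0c i (by omega) hvi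
          have hj : j = q 2 := huniq 2 h2A h2c j hjl hvj
          omega
      obtain ⟨j0, hj0lt, hj0X⟩ := hfirst
      have hins : insert j0 (S3.image efun) ⊆ X := by
        intro x hx
        rcases Finset.mem_insert.1 hx with h | h
        · rw [h]; exact hj0X
        · obtain ⟨s, hs, rfl⟩ := Finset.mem_image.1 h
          exact (heX s hs).2
      have hj0notin : j0 ∉ S3.image efun := by
        intro h
        obtain ⟨s, hs, heq⟩ := Finset.mem_image.1 h
        have h1 := (heX s hs).1
        have h2 := hs0min s hs
        omega
      have hcardins : S3.card + 1 ≤ X.card := by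
        have h1 : (insert j0 (S3.image efun)).card = (S3.image efun).card + 1 :=
          Finset.card_insert_of_notMem hj0notin
        have h2 : (S3.image efun).card = S3.card := Finset.card_image_of_injOn heinj
        have h3 := Finset.card_le_card hins
        omega
      omega
  · -- 2 is a multi: S3 = S1
    have h2S1 : 2 ∉ S1 := by
      rw [hS1def, Finset.mem_filter]
      tauto
    have hS3S1 : S3 = S1 := by
      rw [hS3def]
      exact Finset.erase_eq_of_notMem h2S1
    rw [hS3S1] at hS3X
    omega
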